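/- Let D be a graph in which every edge is classified, relative to a 'preferable direction' assignment at alive vertices, as ordinary, repelling, or attracting, where: at each alive vertex exactly one outgoing edge direction is preferable, dead vertices have no preferable direction, and a repelling edge is one where neither of its two directions is preferable at its initial vertex. Suppose a component of D contains a closed path p = E₁⋯E_k ending at a dead vertex with all edges distinct such that α(E₁) = ω(E_s) for some s ≤ k (i.e., the component is non-contractible through the dead vertex). Then p contains a repelling edge. -/

import Mathlib

/-- A graph given by oriented edges with an involution reversing orientation. -/
structure DGraph where
  V : Type
  E : Type
  src : E → V
  bar : E → E
  bar_involutive : Function.Involutive bar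
  bar_ne : ∀ e : E, bar e ≠ e

/-- Terminal vertex of an oriented edge. -/
def DGraph.tgt (D : DGraph) (e : D.E) : D.V := D.src (D.bar e)

/-- Lemma 7.3: let `pref` assign to each alive vertex its unique preferable outgoing
edge (dead vertices get `none`).  If a reduced edge path `E₁ ⋯ E_k` with distinct
edges ends at a dead vertex and satisfies `α(E₁) = ω(E_s)` for some `s ≤ k`
(non-contractibility through the dead vertex), then the path contains a repelling
edge, i.e. an edge `e` whose direction is not preferable at `α(e)` and whose reverse
is not preferable at `ω(e)`. -/
theorem repelling_edge_exists (D : DGraph) (pref : D.V → Option D.E)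
    (hpref : ∀ (v : D.V) (e : D.E), pref v = some e → D.src e = v)
    (es : List D.E) (hne : es ≠ [])
    (hchain : List.Chain' (fun a b => D.tgt a = D.src b) es)
    (hred : List.Chain' (fun a b => b ≠ D.bar a) es)
    (hnodup : es.Nodup)
    (hdead : pref (D.tgt (es.getLast hne)) = none)
    (hloop : ∃ (s : ℕ) (hs : s < es.length),
      D.tgt (es.get ⟨s, hs⟩) = D.src (es.head hne)) :
    ∃ e ∈ es, pref (D.src e) ≠ some e ∧ pref (D.tgt e) ≠ some (D.bar e) := by
  by_contra hcon
  push_neg at hcon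
  -- hcon : ∀ e ∈ es, pref (D.src e) ≠ some e → pref (D.tgt e) = some (D.bar e)
  have hstep : ∀ e ∈ es, pref (D.tgt e) ≠ some (D.bar e) → pref (D.src e) = some e := by
    intro e he h
    by_contra h2
    exact h (hcon e he h2)
  -- key: every edge is preferable at its source, by downward induction
  have key : ∀ d i (hi : i + d + 1 = es.length),
      pref (D.src (es.get ⟨i, by omega⟩)) = some (es.get ⟨i, by omega⟩) := by
    intro d
    induction d with
    | zero =>
      intro i hi
      have hilast : es.get ⟨i, by omega⟩ = es.getLast hne := by
        rw [List.getLast_eq_getElem, List.get_eq_getElem]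
        congr 1
        simp
        omega
      rw [hilast]
      apply hstep _ (List.getLast_mem hne)
      rw [hdead]
      simp
    | succ d ih =>
      intro i hi
      have hi1 : i + 1 + d + 1 = es.length := by omega
      have hIH := ih (i + 1) hi1
      apply hstep _ (es.get_mem ⟨i, _⟩)
      have hchain' : D.tgt (es.get ⟨i, by omega⟩) = D.src (es.get ⟨i + 1, by omega⟩) := List.isChain_iff_getElem.mp hchain i (by omega)
      have hred' : es.get ⟨i + 1, by omega⟩ ≠ D.bar (es.get ⟨i, by omega⟩) := List.isChain_iff_getElem.mp hred i (by omega)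
      rw [hchain', hIH]
      intro hEq
      exact hred' (Option.some_injective _ hEq)
  obtain ⟨s, hs, hsrc⟩ := hloop
  have hhead : es.head hne = es.get ⟨0, by
      cases es
      · exact absurd rfl hne
      · simp⟩ := by
    cases es
    · exact absurd rfl hne
    · rfl
  have key0 : pref (D.src (es.head hne)) = some (es.head hne) := by
    rw [hhead]
    exact key (es.length - 1) 0 (by omega)
  by_cases hend : s + 1 = es.length
  · -- s is the last index: tgt of last edge = src of head, but dead
    have : es.get ⟨s, hs⟩ = es.getLast hne := by
      rw [List.getLast_eq_getElem, List.get_eq_getElem]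
      congr 1
      simp
      omega
    rw [this] at hsrc
    rw [hsrc] at hdead
    rw [hdead] at key0
    exact nomatch key0
  · have hs1 : s + 1 < es.length := by omega
    have hchain' : D.tgt (es.get ⟨s, hs⟩) = D.src (es.get ⟨s + 1, hs1⟩) := List.isChain_iff_getElem.mp hchain s (by omega)
    have keys1 := key (es.length - s - 2) (s + 1) (by omega)
    have : D.src (es.get ⟨s + 1, hs1⟩) = D.src (es.head hne) := by
      rw [← hchain']
      exact hsrc
    rw [this, key0] at keys1
    have heq := Option.some_injective _ keys1
    have : (⟨s + 1, hs1⟩ : Fin es.length) = ⟨0, by omega⟩ :=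
      (List.Nodup.get_inj_iff hnodup).mp (by rw [← heq, hhead])
    simp at this
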